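/- arXiv:0909.0436 — 8 statements merged into one kernel-verified Lean document; each statement's English description precedes it below -/
import Mathlib

section
/- Let B be an m×k matrix and A an m×n matrix over R. Then: (1) for every matrix U with m columns, (B | A) ≤ₙ (UB | UA); (2) for every matrix V with k rows, (BV | A) ≤ₙ (B | A); (3) for every k×n matrix G, (B | A + BG) ≤ₙ (B | A). Moreover, ≤ₙ is the least pre-order on such pairs satisfying (1), (2) and (3): if ≺ is any pre-order on pairs of matrices (with the right matrix having n columns and both matrices having equally many rows) satisfying (1), (2) and (3), then (B | A) ≤ₙ (B' | A') implies (B | A) ≺ (B' | A'). -/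
/-- A pair `(B | A)` of matrices over `R`, where `A` has `n` columns and `B` has the
same number of rows as `A`. -/
structure MatrixPair (R : Type*) [Ring R] (n : ℕ) where
  m : ℕ
  k : ℕ
  B : Matrix (Fin m) (Fin k) R
  A : Matrix (Fin m) (Fin n) R

/-- `(B | A) ≤ₙ (B' | A')`: there exist matrices `U`, `V`, `G` with
`U * B = B' * V` and `U * A = A' + B' * G`. -/
def MatrixPair.le {R : Type*} [Ring R] {n : ℕ} (p q : MatrixPair R n) : Prop :=
  ∃ (U : Matrix (Fin q.m) (Fin p.m) R) (V : Matrix (Fin q.k) (Fin p.k) R)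
    (G : Matrix (Fin q.k) (Fin n) R),
    U * p.B = q.B * V ∧ U * p.A = q.A + q.B * G

/-- The three Rules of Divisibility hold for `≤ₙ`, and `≤ₙ` is the least pre-order
on pairs of matrices satisfying them. -/
theorem rules_of_divisibility (R : Type*) [Ring R] (n : ℕ) :
    (∀ (p : MatrixPair R n) (m' : ℕ) (U : Matrix (Fin m') (Fin p.m) R),
      p.le ⟨m', p.k, U * p.B, U * p.A⟩) ∧
    (∀ (p : MatrixPair R n) (k' : ℕ) (V : Matrix (Fin p.k) (Fin k') R),
      MatrixPair.le ⟨p.m, k', p.B * V, p.A⟩ p) ∧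
    (∀ (p : MatrixPair R n) (G : Matrix (Fin p.k) (Fin n) R),
      MatrixPair.le ⟨p.m, p.k, p.B, p.A + p.B * G⟩ p) ∧
    (∀ r : MatrixPair R n → MatrixPair R n → Prop,
      (∀ p, r p p) →
      (∀ p q s, r p q → r q s → r p s) →
      (∀ (p : MatrixPair R n) (m' : ℕ) (U : Matrix (Fin m') (Fin p.m) R),
        r p ⟨m', p.k, U * p.B, U * p.A⟩) →
      (∀ (p : MatrixPair R n) (k' : ℕ) (V : Matrix (Fin p.k) (Fin k') R),
        r ⟨p.m, k', p.B * V, p.A⟩ p) →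
      (∀ (p : MatrixPair R n) (G : Matrix (Fin p.k) (Fin n) R),
        r ⟨p.m, p.k, p.B, p.A + p.B * G⟩ p) →
      ∀ p q : MatrixPair R n, p.le q → r p q) := by
  refine ⟨?_, ?_, ?_, ?_⟩
  · intro p m' U
    exact ⟨U, 1, 0, by simp, by simp⟩
  · intro p k' V
    exact ⟨1, V, 0, by simp [Matrix.mul_assoc], by simp⟩
  · intro p G
    exact ⟨1, 1, G, by simp, by simp⟩
  · rintro r hrefl htrans h1 h2 h3 p q ⟨U, V, G, hB, hA⟩
    have s1 := h1 p q.m U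
    rw [hB, hA] at s1
    have s2 := h2 ⟨q.m, q.k, q.B, q.A + q.B * G⟩ p.k V
    have s3 := h3 q G
    exact htrans _ _ _ s1 (htrans _ _ _ s2 s3)
end

section
/- Let A be an m×n matrix, B an m×k matrix, A' an m'×n matrix, and B' an m'×k' matrix over R. Define the pair (B | A) ∧ (B' | A') to be ( diag(B, B') | [A; A'] ), where diag(B, B') is the (m+m')×(k+k') block-diagonal matrix with blocks B and B', and [A; A'] is the (m+m')×n matrix obtained by stacking A above A'. Then (B | A) ∧ (B' | A') is an infimum of (B | A) and (B' | A') with respect to ≤ₙ: it satisfies (B | A) ∧ (B' | A') ≤ₙ (B | A) and (B | A) ∧ (B' | A') ≤ₙ (B' | A'), and for every pair (B'' | A'') with (B'' | A'') ≤ₙ (B | A) and (B'' | A'') ≤ₙ (B' | A'), one has (B'' | A'') ≤ₙ (B | A) ∧ (B' | A'). -/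
/-- `(B | A) ≤ₙ (B' | A')`: there exist matrices `U`, `V`, `G` with
`U * B = B' * V` and `U * A = A' + B' * G`. -/
def MatPairLE (R : Type*) [Ring R] {m k m' k' n : Type*}
    [Fintype m] [Fintype k']
    (B : Matrix m k R) (A : Matrix m n R)
    (B' : Matrix m' k' R) (A' : Matrix m' n R) : Prop :=
  ∃ (U : Matrix m' m R) (V : Matrix k' k R) (G : Matrix k' n R),
    U * B = B' * V ∧ U * A = A' + B' * G

lemma fromRows_add' {R : Type*} [Ring R] {m₁ m₂ n : Type*}
    (X : Matrix m₁ n R) (Y : Matrix m₁ n R) (Z : Matrix m₂ n R) (W : Matrix m₂ n R) :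
    Matrix.fromRows (X + Y) (Z + W) = Matrix.fromRows X Z + Matrix.fromRows Y W := by
  ext (_ | _) _ <;> simp

/-- The pair `(diag(B, B') | [A; A'])` is an infimum of `(B | A)` and `(B' | A')`
with respect to `≤ₙ`. -/
theorem pair_infimum {R : Type*} [Ring R] {m k m' k' n : ℕ}
    (B : Matrix (Fin m) (Fin k) R) (A : Matrix (Fin m) (Fin n) R)
    (B' : Matrix (Fin m') (Fin k') R) (A' : Matrix (Fin m') (Fin n) R) :
    MatPairLE R (Matrix.fromBlocks B 0 0 B') (Matrix.fromRows A A') B A ∧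
    MatPairLE R (Matrix.fromBlocks B 0 0 B') (Matrix.fromRows A A') B' A' ∧
    (∀ (m'' k'' : ℕ) (B'' : Matrix (Fin m'') (Fin k'') R)
      (A'' : Matrix (Fin m'') (Fin n) R),
      MatPairLE R B'' A'' B A → MatPairLE R B'' A'' B' A' →
      MatPairLE R B'' A'' (Matrix.fromBlocks B 0 0 B') (Matrix.fromRows A A')) := by
  refine ⟨⟨Matrix.fromCols 1 0, Matrix.fromCols 1 0, 0, ?_, ?_⟩,
    ⟨Matrix.fromCols 0 1, Matrix.fromCols 0 1, 0, ?_, ?_⟩, ?_⟩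
  · rw [Matrix.fromCols_mul_fromBlocks]; simp
  · rw [Matrix.fromCols_mul_fromRows]; simp
  · rw [Matrix.fromCols_mul_fromBlocks]; simp
  · rw [Matrix.fromCols_mul_fromRows]; simp
  · rintro m'' k'' B'' A'' ⟨U₁, V₁, G₁, h₁, h₂⟩ ⟨U₂, V₂, G₂, h₃, h₄⟩
    refine ⟨Matrix.fromRows U₁ U₂, Matrix.fromRows V₁ V₂, Matrix.fromRows G₁ G₂, ?_, ?_⟩
    · rw [Matrix.fromRows_mul, Matrix.fromBlocks_mul_fromRows, h₁, h₃]; simp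
    · rw [Matrix.fromRows_mul, Matrix.fromBlocks_mul_fromRows, h₂, h₄, fromRows_add']
      simp
end

section
/- The following are equivalent for an m×k matrix B over R: (1) B is regular, i.e. there exists a k×m matrix C over R with BCB = B; (2) for every n and every m×n matrix A, there exists a matrix A' with n columns such that (B | A) ≈ₙ (0 | A'); (3) there exists a matrix A' with m columns such that (B | Iₘ) ≈ₘ (0 | A'), where Iₘ is the m×m identity matrix. -/
/-- `(B | A) ≈ₙ (B' | A')`: both inequalities hold. -/
def MatPairEquiv (R : Type*) [Ring R] {m k m' k' n : Type*}
    [Fintype m] [Fintype k] [Fintype m'] [Fintype k']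
    (B : Matrix m k R) (A : Matrix m n R)
    (B' : Matrix m' k' R) (A' : Matrix m' n R) : Prop :=
  MatPairLE R B A B' A' ∧ MatPairLE R B' A' B A

private lemma reg_imp {R : Type*} [Ring R] {m k : ℕ}
    (B : Matrix (Fin m) (Fin k) R)
    (h : ∃ C : Matrix (Fin k) (Fin m) R, B * C * B = B) :
    ∀ (n : ℕ) (A : Matrix (Fin m) (Fin n) R),
      ∃ (m' k' : ℕ) (A' : Matrix (Fin m') (Fin n) R),
        MatPairEquiv R B A (0 : Matrix (Fin m') (Fin k') R) A' := by
  obtain ⟨C, hC⟩ := h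
  intro n A
  refine ⟨m, k, A - B * C * A, ⟨⟨1 - B * C, 0, 0, ?_, ?_⟩, ⟨1, 0, -(C * A), ?_, ?_⟩⟩⟩
  · rw [Matrix.zero_mul, Matrix.sub_mul, Matrix.one_mul, hC, sub_self]
  · rw [Matrix.zero_mul, add_zero, Matrix.sub_mul, Matrix.one_mul]
  · rw [Matrix.mul_zero, Matrix.mul_zero]
  · rw [Matrix.one_mul, Matrix.mul_neg, ← Matrix.mul_assoc, sub_eq_add_neg]

private lemma hom_imp {R : Type*} [Ring R] {m k : ℕ}
    (B : Matrix (Fin m) (Fin k) R)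
    (h : ∃ (m' k' : ℕ) (A' : Matrix (Fin m') (Fin m) R),
        MatPairEquiv R B (1 : Matrix (Fin m) (Fin m) R)
          (0 : Matrix (Fin m') (Fin k') R) A') :
    ∃ C : Matrix (Fin k) (Fin m) R, B * C * B = B := by
  obtain ⟨m', k', A', ⟨⟨U₀, V₀, G₀, hUB, hUA⟩, ⟨U, V, G, hBV, hU⟩⟩⟩ := h
  rw [Matrix.zero_mul] at hUB
  rw [Matrix.zero_mul, add_zero, Matrix.mul_one] at hUA
  have h2 : (1 + B * G) * B = U * A' * B := by rw [hU]
  rw [Matrix.add_mul, Matrix.one_mul, Matrix.mul_assoc U, ← hUA, hUB, Matrix.mul_zero] at h2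
  have h3 : B * G * B = -B := eq_neg_of_add_eq_zero_right h2
  refine ⟨-G, ?_⟩
  rw [Matrix.mul_neg, Matrix.neg_mul, h3, neg_neg]

/-- A matrix `B` is regular (`∃ C, B * C * B = B`) iff every pair `(B | A)` is
equivalent to a homogeneous system, iff `(B | Iₘ)` is equivalent to a homogeneous
system. -/
theorem regular_matrix_tfae {R : Type*} [Ring R] {m k : ℕ}
    (B : Matrix (Fin m) (Fin k) R) :
    ((∃ C : Matrix (Fin k) (Fin m) R, B * C * B = B) ↔
      (∀ (n : ℕ) (A : Matrix (Fin m) (Fin n) R),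
        ∃ (m' k' : ℕ) (A' : Matrix (Fin m') (Fin n) R),
          MatPairEquiv R B A (0 : Matrix (Fin m') (Fin k') R) A')) ∧
    ((∀ (n : ℕ) (A : Matrix (Fin m) (Fin n) R),
        ∃ (m' k' : ℕ) (A' : Matrix (Fin m') (Fin n) R),
          MatPairEquiv R B A (0 : Matrix (Fin m') (Fin k') R) A') ↔
      (∃ (m' k' : ℕ) (A' : Matrix (Fin m') (Fin m) R),
        MatPairEquiv R B (1 : Matrix (Fin m) (Fin m) R)
          (0 : Matrix (Fin m') (Fin k') R) A')) := by
  constructor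
  · exact ⟨reg_imp B, fun h2 => hom_imp B (h2 m 1)⟩
  · exact ⟨fun h2 => h2 m 1, fun h3 => reg_imp B (hom_imp B h3)⟩
end

section
/- The following are equivalent for an associative ring R with identity: (1) R is von Neumann regular, i.e. for every r ∈ R there exists s ∈ R with rsr = r; (2) for every n ≥ 1 and every pair (B | A) with A having n columns, there exists a matrix A' with n columns such that (B | A) ≈ₙ (0 | A'); (3) for every pair (B | A) with A having 1 column, there exists a column matrix A' such that (B | A) ≈₁ (0 | A'). -/
section Aux

variable {R : Type*} [Ring R]

private lemma rid1 (e₁ e₂ x : R) (h21 : e₂ * e₁ = 0) (hx : x * e₁ = x) :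
    x * (e₁ + e₂ - e₁ * e₂) = x := by
  rw [mul_sub, mul_add, hx, ← mul_assoc x e₁ e₂, hx]
  abel

private lemma rid2 (e₁ e₂ x : R) (hx1 : x * e₁ = 0) (hx2 : x * e₂ = x) :
    x * (e₁ + e₂ - e₁ * e₂) = x := by
  rw [mul_sub, mul_add, hx1, ← mul_assoc x e₁ e₂, hx1, zero_mul, sub_zero, zero_add, hx2]

private lemma combine_idem (e₁ e₂ : R) (h1 : e₁ * e₁ = e₁) (h2 : e₂ * e₂ = e₂)
    (h21 : e₂ * e₁ = 0) :
    (e₁ + e₂ - e₁ * e₂) * (e₁ + e₂ - e₁ * e₂) = e₁ + e₂ - e₁ * e₂ := by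
  have he1 : e₁ * (e₁ + e₂ - e₁ * e₂) = e₁ := rid1 e₁ e₂ e₁ h21 h1
  have he2 : e₂ * (e₁ + e₂ - e₁ * e₂) = e₂ := rid2 e₁ e₂ e₂ h21 h2
  rw [sub_mul, add_mul, he1, he2, mul_assoc e₁ e₂ _, he2]

private lemma stepE (a e₁ s : R) (he₁ : e₁ * e₁ = e₁)
    (hs : (a - a * e₁) * s * (a - a * e₁) = a - a * e₁) :
    ∃ E : R, E = (1 - e₁) * s * a + e₁ - (1 - e₁) * s * a * e₁ ∧
      E * E = E ∧ a * E = a ∧ ∀ x : R, x * e₁ = x → x * E = x := by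
  have hann : (a - a * e₁) * e₁ = 0 := by
    rw [sub_mul, mul_assoc, he₁, sub_self]
  have h21 : (s * (a - a * e₁)) * e₁ = 0 := by
    rw [mul_assoc, hann, mul_zero]
  have h2 : (s * (a - a * e₁)) * (s * (a - a * e₁)) = s * (a - a * e₁) := by
    rw [mul_assoc s (a - a * e₁) _, ← mul_assoc (a - a * e₁) s _, hs]
  have hE : (1 - e₁) * s * a + e₁ - (1 - e₁) * s * a * e₁
      = e₁ + s * (a - a * e₁) - e₁ * (s * (a - a * e₁)) := by noncomm_ring
  refine ⟨(1 - e₁) * s * a + e₁ - (1 - e₁) * s * a * e₁, rfl, ?_, ?_, ?_⟩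
  · rw [hE]; exact combine_idem _ _ he₁ h2 h21
  · rw [hE]
    have ha1 : (a - a * e₁) * (e₁ + s * (a - a * e₁) - e₁ * (s * (a - a * e₁)))
        = a - a * e₁ := by
      refine rid2 _ _ _ hann ?_
      rw [← mul_assoc (a - a * e₁) s _, hs]
    have ha2 : (a * e₁) * (e₁ + s * (a - a * e₁) - e₁ * (s * (a - a * e₁)))
        = a * e₁ := by
      refine rid1 _ _ _ h21 ?_
      rw [mul_assoc, he₁]
    calc a * (e₁ + s * (a - a * e₁) - e₁ * (s * (a - a * e₁)))
        = ((a - a * e₁) + a * e₁) * (e₁ + s * (a - a * e₁) - e₁ * (s * (a - a * e₁))) := by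
          rw [sub_add_cancel]
      _ = a := by rw [add_mul, ha1, ha2, sub_add_cancel]
  · intro x hx
    rw [hE]
    exact rid1 _ _ _ h21 hx

lemma lemA (hreg : ∀ r : R, ∃ s : R, r * s * r = r) :
    ∀ (m : ℕ) (d : Fin m → R), ∃ c : Fin m → R,
      (∑ j, c j * d j) * (∑ j, c j * d j) = (∑ j, c j * d j) ∧
      ∀ i, d i * (∑ j, c j * d j) = d i := by
  intro m
  induction m with
  | zero => exact fun d => ⟨0, by simp, fun i => i.elim0⟩
  | succ m ih =>
    intro d
    obtain ⟨c₁, he₁, hd₁⟩ := ih (fun j => d j.succ)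
    obtain ⟨s, hs⟩ := hreg (d 0 - d 0 * ∑ j, c₁ j * d j.succ)
    obtain ⟨E, hEdef, hEE, haE, hxE⟩ :=
      stepE (d 0) (∑ j, c₁ j * d j.succ) s he₁ hs
    refine ⟨Fin.cons ((1 - ∑ j, c₁ j * d j.succ) * s)
      (fun j => c₁ j - (1 - ∑ j, c₁ j * d j.succ) * s * (d 0) * c₁ j), ?_, ?_⟩ <;>
    · have hsum : (∑ p, (Fin.cons ((1 - ∑ j, c₁ j * d j.succ) * s)
          (fun j => c₁ j - (1 - ∑ j, c₁ j * d j.succ) * s * (d 0) * c₁ j)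
            : Fin (m+1) → R) p * d p) = E := by
        rw [Fin.sum_univ_succ]
        simp only [Fin.cons_zero, Fin.cons_succ]
        have expand : ∀ j : Fin m,
            (c₁ j - (1 - ∑ j, c₁ j * d j.succ) * s * (d 0) * c₁ j) * d j.succ
            = c₁ j * d j.succ
              - ((1 - ∑ j, c₁ j * d j.succ) * s * (d 0)) * (c₁ j * d j.succ) := by
          intro j
          rw [sub_mul, mul_assoc ((1 - ∑ j, c₁ j * d j.succ) * s * (d 0)) (c₁ j) (d j.succ)]
        rw [Finset.sum_congr rfl (fun j _ => expand j), Finset.sum_sub_distrib,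
          ← Finset.mul_sum, hEdef]
        exact (add_sub_assoc _ _ _).symm
      rw [hsum]
      first
        | exact hEE
        | · intro i
            induction i using Fin.cases with
            | zero => exact haE
            | succ i => exact hxE (d i.succ) (hd₁ i)

lemma col_reg (hreg : ∀ r : R, ∃ s : R, r * s * r = r) (m : ℕ)
    (d : Matrix (Fin m) (Fin 1) R) :
    ∃ c : Matrix (Fin 1) (Fin m) R, d * c * d = d := by
  obtain ⟨cf, -, hcf⟩ := lemA hreg m (fun i => d i 0)
  set c : Matrix (Fin 1) (Fin m) R := Matrix.of fun _ j => cf j with hc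
  refine ⟨c, ?_⟩
  ext i j
  have hj : j = 0 := Subsingleton.elim _ _
  subst hj
  rw [Matrix.mul_apply]
  have hdc : ∀ p, (d * c) i p = d i 0 * cf p := by
    intro p
    rw [Matrix.mul_apply]
    simp [hc]
  calc (∑ p, (d * c) i p * d p 0)
      = ∑ p, d i 0 * (cf p * d p 0) := by
        refine Finset.sum_congr rfl fun p _ => ?_
        rw [hdc p, mul_assoc]
    _ = d i 0 * ∑ p, cf p * d p 0 := (Finset.mul_sum _ _ _).symm
    _ = d i 0 := hcf i

lemma mat_reg (hreg : ∀ r : R, ∃ s : R, r * s * r = r) :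
    ∀ (k m : ℕ) (B : Matrix (Fin m) (Fin k) R),
      ∃ C : Matrix (Fin k) (Fin m) R, B * C * B = B := by
  intro k
  induction k with
  | zero =>
    intro m B
    exact ⟨0, by ext i j; exact j.elim0⟩
  | succ k ih =>
    intro m B
    obtain ⟨C₀, hC₀⟩ := ih m (Matrix.of fun i j => B i j.castSucc)
    set B₀ : Matrix (Fin m) (Fin k) R := Matrix.of fun i j => B i j.castSucc with hB₀
    set dc : Matrix (Fin m) (Fin 1) R := Matrix.of fun i _ => B i (Fin.last k) with hdc
    obtain ⟨c', hc'⟩ := col_reg hreg m (dc - B₀ * C₀ * dc)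
    -- abbreviations
    set E : Matrix (Fin m) (Fin m) R := B₀ * C₀ with hE
    set cb : Matrix (Fin 1) (Fin m) R := c' * (1 - E) with hcb
    set Ct : Matrix (Fin k) (Fin m) R := C₀ - C₀ * dc * cb with hCt
    set X : Matrix (Fin m) (Fin m) R := B₀ * Ct + dc * cb with hX
    have hEB : E * B₀ = B₀ := hC₀
    have h1B : (1 - E) * B₀ = 0 := by rw [Matrix.sub_mul, Matrix.one_mul, hEB, sub_self]
    have hcbB : cb * B₀ = 0 := by rw [hcb, Matrix.mul_assoc, h1B, Matrix.mul_zero]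
    have h1d : (1 - E) * dc = dc - E * dc := by rw [Matrix.sub_mul, Matrix.one_mul]
    have hcbd : cb * dc = c' * (dc - E * dc) := by rw [hcb, Matrix.mul_assoc, h1d]
    have hXB : X * B₀ = B₀ := by
      rw [hX, Matrix.add_mul, Matrix.mul_assoc B₀ Ct B₀, Matrix.mul_assoc dc cb B₀, hcbB,
        Matrix.mul_zero, add_zero, hCt, Matrix.sub_mul, Matrix.mul_assoc (C₀ * dc) cb B₀,
        hcbB, Matrix.mul_zero, sub_zero, ← Matrix.mul_assoc B₀ C₀ B₀, hC₀]
    have hXd : X * dc = dc := by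
      rw [hX, Matrix.add_mul, Matrix.mul_assoc B₀ Ct dc, Matrix.mul_assoc dc cb dc, hcbd,
        hCt, Matrix.sub_mul, Matrix.mul_assoc (C₀ * dc) cb dc, hcbd]
      have hcd : (dc - E * dc) * (c' * (dc - E * dc)) = dc - E * dc := by
        rw [← Matrix.mul_assoc, hc']
      calc B₀ * (C₀ * dc - C₀ * dc * (c' * (dc - E * dc))) + dc * (c' * (dc - E * dc))
          = E * dc - E * dc * (c' * (dc - E * dc)) + dc * (c' * (dc - E * dc)) := by
            rw [Matrix.mul_sub, ← Matrix.mul_assoc B₀ C₀ dc, ← hE,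
              ← Matrix.mul_assoc B₀ (C₀ * dc) _, ← Matrix.mul_assoc B₀ C₀ dc, ← hE]
        _ = E * dc + (dc - E * dc) * (c' * (dc - E * dc)) := by
            rw [Matrix.sub_mul]; abel
        _ = dc := by rw [hcd]; abel
    -- assemble C
    refine ⟨Matrix.of fun p j => Fin.lastCases (cb 0 j) (fun p' => Ct p' j) p, ?_⟩
    have hBC : B * (Matrix.of fun p j => Fin.lastCases (cb 0 j) (fun p' => Ct p' j) p :
        Matrix (Fin (k + 1)) (Fin m) R) = X := by
      ext i j
      rw [Matrix.mul_apply, Fin.sum_univ_castSucc]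
      simp only [Matrix.of_apply, Fin.lastCases_castSucc, Fin.lastCases_last]
      rw [hX, Matrix.add_apply, Matrix.mul_apply, Matrix.mul_apply, Fin.sum_univ_one]
      simp [hB₀, hdc]
    rw [hBC]
    ext i j
    induction j using Fin.lastCases with
    | last =>
      have : (X * B) i (Fin.last k) = (X * dc) i 0 := by
        rw [Matrix.mul_apply, Matrix.mul_apply]
        exact Finset.sum_congr rfl fun l _ => by rw [hdc]; rfl
      rw [this, hXd, hdc]
      rfl
    | cast j' =>
      have : (X * B) i j'.castSucc = (X * B₀) i j' := by
        rw [Matrix.mul_apply, Matrix.mul_apply]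
        exact Finset.sum_congr rfl fun l _ => by rw [hB₀]; rfl
      rw [this, hXB, hB₀]
      rfl

variable {R : Type*} [Ring R]

lemma key12 (hreg : ∀ r : R, ∃ s : R, r * s * r = r)
    (n : ℕ) (m k : ℕ) (B : Matrix (Fin m) (Fin k) R) (A : Matrix (Fin m) (Fin n) R) :
    ∃ (m' k' : ℕ) (A' : Matrix (Fin m') (Fin n) R),
      MatPairEquiv R B A (0 : Matrix (Fin m') (Fin k') R) A' := by
  obtain ⟨C, hC⟩ := mat_reg hreg k m B
  refine ⟨m, k, A - B * (C * A), ⟨1 - B * C, 0, 0, ?_, ?_⟩, ⟨1, 0, -(C * A), ?_, ?_⟩⟩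
  · rw [Matrix.sub_mul, Matrix.one_mul, Matrix.mul_assoc, ← Matrix.mul_assoc B C B, hC,
      sub_self, Matrix.zero_mul]
  · rw [Matrix.sub_mul, Matrix.one_mul, Matrix.mul_assoc, Matrix.zero_mul, add_zero]
  · rw [Matrix.one_mul, Matrix.mul_zero]
  · rw [Matrix.one_mul, Matrix.mul_neg, sub_eq_add_neg]

lemma key31
    (h : ∀ (m k : ℕ) (B : Matrix (Fin m) (Fin k) R) (A : Matrix (Fin m) (Fin 1) R),
      ∃ (m' k' : ℕ) (A' : Matrix (Fin m') (Fin 1) R),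
        MatPairEquiv R B A (0 : Matrix (Fin m') (Fin k') R) A') :
    ∀ r : R, ∃ s : R, r * s * r = r := by
  intro r
  set Br : Matrix (Fin 1) (Fin 1) R := Matrix.of fun _ _ => r with hBr
  obtain ⟨m', k', A', ⟨U, V, G, hUB, hUA⟩, U₂, V₂, G₂, hUB₂, hUA₂⟩ := h 1 1 Br 1
  refine ⟨-(G₂ 0 0), ?_⟩
  have hUB0 : U * Br = 0 := by rw [hUB, Matrix.zero_mul]
  have hA' : A' = U := by
    rw [Matrix.mul_one, Matrix.zero_mul, add_zero] at hUA
    exact hUA.symm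
  rw [hA'] at hUA₂
  have h5 : U₂ * U * Br = Br + Br * G₂ * Br := by
    rw [hUA₂, Matrix.add_mul, Matrix.one_mul]
  have h6 : Br + Br * G₂ * Br = 0 := by
    rw [← h5, Matrix.mul_assoc, hUB0, Matrix.mul_zero]
  have h7 := congrFun (congrFun h6 0) 0
  simp only [Matrix.add_apply, Matrix.mul_apply, Fin.sum_univ_one, Matrix.zero_apply,
    hBr, Matrix.of_apply] at h7
  -- h7 : r + r * G₂ 0 0 * r = 0
  have h8 : r * G₂ 0 0 * r = -r := eq_neg_of_add_eq_zero_right h7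
  rw [mul_neg, neg_mul, h8, neg_neg]

end Aux

/-- `R` is von Neumann regular iff for every `n ≥ 1` (resp. `n = 1`) every pair
`(B | A)` with `A` having `n` columns is equivalent to a homogeneous system. -/
theorem von_neumann_regular_tfae (R : Type*) [Ring R] :
    ((∀ r : R, ∃ s : R, r * s * r = r) ↔
      (∀ (n : ℕ), 1 ≤ n →
        ∀ (m k : ℕ) (B : Matrix (Fin m) (Fin k) R) (A : Matrix (Fin m) (Fin n) R),
          ∃ (m' k' : ℕ) (A' : Matrix (Fin m') (Fin n) R),
            MatPairEquiv R B A (0 : Matrix (Fin m') (Fin k') R) A')) ∧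
    ((∀ (n : ℕ), 1 ≤ n →
        ∀ (m k : ℕ) (B : Matrix (Fin m) (Fin k) R) (A : Matrix (Fin m) (Fin n) R),
          ∃ (m' k' : ℕ) (A' : Matrix (Fin m') (Fin n) R),
            MatPairEquiv R B A (0 : Matrix (Fin m') (Fin k') R) A') ↔
      (∀ (m k : ℕ) (B : Matrix (Fin m) (Fin k) R) (A : Matrix (Fin m) (Fin 1) R),
        ∃ (m' k' : ℕ) (A' : Matrix (Fin m') (Fin 1) R),
          MatPairEquiv R B A (0 : Matrix (Fin m') (Fin k') R) A')) := by
  have e23 : (∀ (n : ℕ), 1 ≤ n →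
      ∀ (m k : ℕ) (B : Matrix (Fin m) (Fin k) R) (A : Matrix (Fin m) (Fin n) R),
        ∃ (m' k' : ℕ) (A' : Matrix (Fin m') (Fin n) R),
          MatPairEquiv R B A (0 : Matrix (Fin m') (Fin k') R) A') →
      (∀ (m k : ℕ) (B : Matrix (Fin m) (Fin k) R) (A : Matrix (Fin m) (Fin 1) R),
        ∃ (m' k' : ℕ) (A' : Matrix (Fin m') (Fin 1) R),
          MatPairEquiv R B A (0 : Matrix (Fin m') (Fin k') R) A') :=
    fun h2 m k B A => h2 1 le_rfl m k B A
  constructor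
  · exact ⟨fun h n _ m k B A => key12 h n m k B A,
      fun h2 => key31 (e23 h2)⟩
  · exact ⟨e23, fun h3 n _ m k B A => key12 (key31 h3) n m k B A⟩
end

section
/- Suppose (B | A) ≤ₙ (B' | A') holds for matrices over R, where A is m×n, B is m×k, A' is m'×n, and B' is m'×k'. Then over the opposite ring Rᵒᵖ, the dual pairs satisfy ( [B'ᵀ; A'ᵀ] | [0; Iₙ] ) ≤ₙ ( [Bᵀ; Aᵀ] | [0; Iₙ] ), where for a matrix X over R, Xᵀ denotes the matrix over Rᵒᵖ whose (i,j) entry is the opposite-ring image of the (j,i) entry of X, [Bᵀ; Aᵀ] denotes the (k+n)×m matrix stacking Bᵀ above Aᵀ, and [0; Iₙ] denotes the (k+n)×n matrix stacking the k×n zero matrix above the n×n identity matrix, and where ≤ₙ on pairs over Rᵒᵖ is defined exactly as over R. -/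
/-- The matrix over `Rᵒᵖ` whose `(i,j)` entry is the opposite-ring image of the
`(j,i)` entry of `X`. -/
def opTranspose {R : Type*} [Ring R] {m n : Type*} (X : Matrix m n R) :
    Matrix n m Rᵐᵒᵖ :=
  Matrix.of fun i j => MulOpposite.op (X j i)

lemma opTranspose_mul {R : Type*} [Ring R] {m n o : Type*} [Fintype n]
    (X : Matrix m n R) (Y : Matrix n o R) :
    opTranspose (X * Y) = opTranspose Y * opTranspose X := by
  ext i j
  simp only [opTranspose, Matrix.of_apply, Matrix.mul_apply]
  rw [← MulOpposite.opAddEquiv_apply, map_sum]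
  simp

lemma opTranspose_add {R : Type*} [Ring R] {m n : Type*}
    (X Y : Matrix m n R) :
    opTranspose (X + Y) = opTranspose X + opTranspose Y := by
  ext i j
  simp [opTranspose]

/-- If `(B | A) ≤ₙ (B' | A')` over `R`, then over `Rᵒᵖ` the dual pairs satisfy
`([B'ᵀ; A'ᵀ] | [0; Iₙ]) ≤ₙ ([Bᵀ; Aᵀ] | [0; Iₙ])`. -/
theorem dual_pair_le {R : Type*} [Ring R] {m k m' k' n : ℕ}
    (B : Matrix (Fin m) (Fin k) R) (A : Matrix (Fin m) (Fin n) R)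
    (B' : Matrix (Fin m') (Fin k') R) (A' : Matrix (Fin m') (Fin n) R)
    (h : MatPairLE R B A B' A') :
    MatPairLE Rᵐᵒᵖ
      (Matrix.fromRows (opTranspose B') (opTranspose A'))
      (Matrix.fromRows (0 : Matrix (Fin k') (Fin n) Rᵐᵒᵖ)
        (1 : Matrix (Fin n) (Fin n) Rᵐᵒᵖ))
      (Matrix.fromRows (opTranspose B) (opTranspose A))
      (Matrix.fromRows (0 : Matrix (Fin k) (Fin n) Rᵐᵒᵖ)
        (1 : Matrix (Fin n) (Fin n) Rᵐᵒᵖ)) := by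
  obtain ⟨U, V, G, h1, h2⟩ := h
  refine ⟨Matrix.fromBlocks (opTranspose V) 0 (opTranspose G) 1,
    opTranspose U, 0, ?_, ?_⟩
  · rw [Matrix.fromBlocks_mul_fromRows, Matrix.fromRows_mul,
      ← opTranspose_mul U B, ← opTranspose_mul U A, h1, h2,
      opTranspose_mul, opTranspose_add, opTranspose_mul]
    simp [add_comm]
  · rw [Matrix.fromBlocks_mul_fromRows]
    simp
end

section
/- Suppose (B | A) ≤ₙ (B' | A') for matrices over R, where A is m×n, B is m×k, A' is m'×n, and B' is m'×k'. Then the (m+m')×(k+n+k') block matrices [[B, A, 0], [0, 0, B']] and [[B, A, 0], [0, A', B']] present isomorphic left R-modules; that is, there is an isomorphism of left R-modules between the cokernel of the linear map R^{m+m'} → R^{k+n+k'} given by right multiplication by the first block matrix and the cokernel of the linear map R^{m+m'} → R^{k+n+k'} given by right multiplication by the second block matrix. -/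
open Matrix

/-- Right multiplication by an invertible matrix gives a linear equivalence on row vectors. -/
noncomputable def vecMulEquivOfInv {R : Type*} [Ring R] {n : Type*} [Fintype n] [DecidableEq n]
    (P Q : Matrix n n R) (hPQ : P * Q = 1) (hQP : Q * P = 1) :
    (n → R) ≃ₗ[R] (n → R) :=
  LinearEquiv.ofLinear P.vecMulLinear Q.vecMulLinear
    (LinearMap.ext fun v => by
      simp [Matrix.vecMulLinear_apply, Matrix.vecMul_vecMul, hQP, Matrix.vecMul_one])
    (LinearMap.ext fun v => by
      simp [Matrix.vecMulLinear_apply, Matrix.vecMul_vecMul, hPQ, Matrix.vecMul_one])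

/-- Left multiplication by a (left-)invertible matrix does not change the row space. -/
lemma range_vecMulLinear_mul {R : Type*} [Ring R] {l n : Type*} [Fintype l] [DecidableEq l]
    (E F : Matrix l l R) (hFE : F * E = 1) (C : Matrix l n R) :
    LinearMap.range (E * C).vecMulLinear = LinearMap.range C.vecMulLinear := by
  apply le_antisymm
  · rintro _ ⟨v, rfl⟩
    exact ⟨v ᵥ* E, by simp [Matrix.vecMulLinear_apply, Matrix.vecMul_vecMul]⟩
  · rintro _ ⟨v, rfl⟩
    refine ⟨v ᵥ* F, ?_⟩
    simp only [Matrix.vecMulLinear_apply, Matrix.vecMul_vecMul, ← Matrix.mul_assoc, hFE,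
      Matrix.one_mul]

/-- If `(B | A) ≤ₙ (B' | A')`, then the block matrices `[[B, A, 0], [0, 0, B']]` and
`[[B, A, 0], [0, A', B']]` present isomorphic left `R`-modules: the cokernels of the
corresponding right-multiplication maps are isomorphic. -/
theorem block_presentations_isomorphic {R : Type*} [Ring R] {m k m' k' n : ℕ}
    (B : Matrix (Fin m) (Fin k) R) (A : Matrix (Fin m) (Fin n) R)
    (B' : Matrix (Fin m') (Fin k') R) (A' : Matrix (Fin m') (Fin n) R)
    (h : MatPairLE R B A B' A') :
    Nonempty (
      (((Fin k ⊕ Fin n) ⊕ Fin k' → R) ⧸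
        LinearMap.range (Matrix.fromBlocks (Matrix.fromCols B A)
          (0 : Matrix (Fin m) (Fin k') R)
          (0 : Matrix (Fin m') (Fin k ⊕ Fin n) R) B').vecMulLinear) ≃ₗ[R]
      (((Fin k ⊕ Fin n) ⊕ Fin k' → R) ⧸
        LinearMap.range (Matrix.fromBlocks (Matrix.fromCols B A)
          (0 : Matrix (Fin m) (Fin k') R)
          (Matrix.fromCols (0 : Matrix (Fin m') (Fin k) R) A')
          B').vecMulLinear)) := by
  obtain ⟨U, V, G, h1, h2⟩ := h
  set M1 : Matrix (Fin m ⊕ Fin m') ((Fin k ⊕ Fin n) ⊕ Fin k') R :=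
    Matrix.fromBlocks (Matrix.fromCols B A) 0 0 B' with hM1
  set M2 : Matrix (Fin m ⊕ Fin m') ((Fin k ⊕ Fin n) ⊕ Fin k') R :=
    Matrix.fromBlocks (Matrix.fromCols B A) 0
      (Matrix.fromCols (0 : Matrix (Fin m') (Fin k) R) A') B' with hM2
  set X : Matrix (Fin k') (Fin k ⊕ Fin n) R := Matrix.fromCols (-V) (-G) with hX
  set P : Matrix ((Fin k ⊕ Fin n) ⊕ Fin k') ((Fin k ⊕ Fin n) ⊕ Fin k') R :=
    Matrix.fromBlocks 1 0 X 1 with hP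
  set Q : Matrix ((Fin k ⊕ Fin n) ⊕ Fin k') ((Fin k ⊕ Fin n) ⊕ Fin k') R :=
    Matrix.fromBlocks 1 0 (-X) 1 with hQ
  have hPQ : P * Q = 1 := by
    rw [hP, hQ, Matrix.fromBlocks_multiply, ← Matrix.fromBlocks_one]; simp
  have hQP : Q * P = 1 := by
    rw [hP, hQ, Matrix.fromBlocks_multiply, ← Matrix.fromBlocks_one]; simp
  set E : Matrix (Fin m ⊕ Fin m') (Fin m ⊕ Fin m') R :=
    Matrix.fromBlocks 1 0 (-U) 1 with hE
  set F : Matrix (Fin m ⊕ Fin m') (Fin m ⊕ Fin m') R :=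
    Matrix.fromBlocks 1 0 U 1 with hF
  have hFE : F * E = 1 := by
    rw [hE, hF, Matrix.fromBlocks_multiply, ← Matrix.fromBlocks_one]; simp
  have key : M1 * P = E * M2 := by
    rw [hM1, hM2, hP, hE, Matrix.fromBlocks_multiply, Matrix.fromBlocks_multiply]
    have e1 : B' * -V = -(U * B) := by rw [Matrix.mul_neg, h1]
    have e2 : B' * -G = -(U * A) + A' := by rw [Matrix.mul_neg, h2]; abel
    simp only [Matrix.mul_one, Matrix.one_mul, Matrix.mul_zero, Matrix.zero_mul,
      add_zero, zero_add, Matrix.neg_mul, hX, Matrix.mul_fromCols, e1, e2]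
    ext i j
    rcases i with i | i <;> rcases j with (j | j) | j <;>
      simp [Matrix.fromCols_apply_inl, Matrix.fromCols_apply_inr]
  have hrange : Submodule.map ((vecMulEquivOfInv P Q hPQ hQP : ((Fin k ⊕ Fin n) ⊕ Fin k' → R) ≃ₗ[R] _) : ((Fin k ⊕ Fin n) ⊕ Fin k' → R) →ₗ[R] _)
      (LinearMap.range M1.vecMulLinear) = LinearMap.range M2.vecMulLinear := by
    rw [← range_vecMulLinear_mul E F hFE M2, ← key]
    apply le_antisymm
    · rintro _ ⟨_, ⟨v, rfl⟩, rfl⟩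
      exact ⟨v, by simp [vecMulEquivOfInv, Matrix.vecMulLinear_apply, Matrix.vecMul_vecMul]⟩
    · rintro _ ⟨v, rfl⟩
      exact ⟨v ᵥ* M1, ⟨v, rfl⟩,
        by simp [vecMulEquivOfInv, Matrix.vecMulLinear_apply, Matrix.vecMul_vecMul]⟩
  exact ⟨Submodule.Quotient.equiv _ _ (vecMulEquivOfInv P Q hPQ hQP) hrange⟩
end

section
/- Let A be an m×n matrix, A' an m×n' matrix, and B an m×k matrix over R. If ( (B, A) | A' ) ≤ₙ' (B | A') then ( (B, A') | A ) ≤ₙ (B | A), where (B, A) denotes the m×(k+n) matrix obtained by placing A to the right of B, and (B, A') the m×(k+n') matrix obtained by placing A' to the right of B. -/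
/-- If `((B, A) | A') ≤ₙ' (B | A')` then `((B, A') | A) ≤ₙ (B | A)`. -/
theorem degenerate_swap {R : Type*} [Ring R] {m k n n' : ℕ}
    (B : Matrix (Fin m) (Fin k) R) (A : Matrix (Fin m) (Fin n) R)
    (A' : Matrix (Fin m) (Fin n') R)
    (h : MatPairLE R (Matrix.fromCols B A) A' B A') :
    MatPairLE R (Matrix.fromCols B A') A B A := by
  obtain ⟨U, V, G, h1, h2⟩ := h
  rw [← Matrix.fromCols_toCols V, Matrix.mul_fromCols,
    Matrix.mul_fromCols, Matrix.fromCols_ext_iff] at h1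
  obtain ⟨hB, hA⟩ := h1
  refine ⟨1 - U, Matrix.fromCols (1 - V.toCols₁) (-G), -(V.toCols₂), ?_, ?_⟩
  · rw [Matrix.mul_fromCols, Matrix.mul_fromCols, Matrix.fromCols_ext_iff]
    constructor
    · simp [Matrix.sub_mul, Matrix.mul_sub, hB]
    · simp [Matrix.sub_mul, h2]
  · simp [Matrix.sub_mul, hA]
    abel
end

section
/- (Lemma Presta II.) Let A, A' be matrices over R with n columns (A of size m×n, A' of size m'×n), and let B be m×k and B' be m'×k'. Then (B | A) ≤ₙ (B' | A') if and only if for every left R-module M, the subgroup (B | A)(M) of Mⁿ is contained in (B' | A')(M); here (B | A)(M) := { a ∈ Mⁿ : there exists c ∈ Mᵏ such that for every i, Σⱼ Bᵢⱼ·cⱼ = Σⱼ Aᵢⱼ·aⱼ }. -/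
universe u

lemma presta_aux {R : Type u} [Ring R] {M : Type u} [AddCommGroup M] [Module R M]
    {α β γ : Type*} [Fintype β] [Fintype γ]
    (P : Matrix α β R) (Q : Matrix β γ R) (x : γ → M) (i : α) :
    ∑ t, P i t • ∑ s, Q t s • x s = ∑ s, (P * Q) i s • x s := by
  simp only [Finset.smul_sum, Matrix.mul_apply, Finset.sum_smul, mul_smul]
  rw [Finset.sum_comm]

/-- Lemma Presta II: `(B | A) ≤ₙ (B' | A')` iff for every left `R`-module `M`, the
subgroup `(B | A)(M) = {a ∈ Mⁿ : ∃ c ∈ Mᵏ, B·c = A·a}` of `Mⁿ` is contained in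
`(B' | A')(M)`. -/
theorem lemma_presta_II {R : Type u} [Ring R] {m k m' k' n : ℕ}
    (B : Matrix (Fin m) (Fin k) R) (A : Matrix (Fin m) (Fin n) R)
    (B' : Matrix (Fin m') (Fin k') R) (A' : Matrix (Fin m') (Fin n) R) :
    MatPairLE R B A B' A' ↔
      ∀ (M : Type u) [AddCommGroup M] [Module R M] (a : Fin n → M),
        (∃ c : Fin k → M, ∀ i, ∑ j, B i j • c j = ∑ j, A i j • a j) →
        (∃ c : Fin k' → M, ∀ i, ∑ j, B' i j • c j = ∑ j, A' i j • a j) := by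
  constructor
  · rintro ⟨U, V, G, hUB, hUA⟩ M _ _ a ⟨c, hc⟩
    refine ⟨fun t => (∑ s, V t s • c s) - ∑ j, G t j • a j, fun i => ?_⟩
    have h1 : ∑ t, B' i t • ((∑ s, V t s • c s) - ∑ j, G t j • a j)
        = (∑ s, (B' * V) i s • c s) - ∑ j, (B' * G) i j • a j := by
      rw [← presta_aux B' V c i, ← presta_aux B' G a i, ← Finset.sum_sub_distrib]
      simp [smul_sub]
    rw [h1, ← hUB, ← presta_aux U B c i]
    have h2 : ∀ t, ∑ s, B t s • c s = ∑ j, A t j • a j := hc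
    simp only [h2]
    rw [presta_aux U A a i, hUA]
    simp [Matrix.add_apply, add_smul, Finset.sum_add_distrib]
  · intro h
    classical
    set r : Fin m → ((Fin n ⊕ Fin k) → R) :=
      fun i => Sum.elim (fun j => -A i j) (fun s => B i s) with hr
    set N : Submodule R ((Fin n ⊕ Fin k) → R) := Submodule.span R (Set.range r) with hN
    set el : Fin n → ((Fin n ⊕ Fin k) → R) := fun j => Pi.single (Sum.inl j) 1 with hel
    set er : Fin k → ((Fin n ⊕ Fin k) → R) := fun s => Pi.single (Sum.inr s) 1 with her
    set a : Fin n → ((Fin n ⊕ Fin k) → R) ⧸ N := fun j => N.mkQ (el j) with ha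
    set c : Fin k → ((Fin n ⊕ Fin k) → R) ⧸ N := fun s => N.mkQ (er s) with hc
    have key : ∀ i, ∑ s, B i s • c s = ∑ j, A i j • a j := by
      intro i
      rw [← sub_eq_zero]
      have h1 : (∑ s, B i s • c s) - ∑ j, A i j • a j
          = N.mkQ ((∑ s, B i s • er s) - ∑ j, A i j • el j) := by
        simp [ha, hc, map_sub, map_sum, map_smul]
      rw [h1]
      have heq : (∑ s, B i s • er s) - ∑ j, A i j • el j = r i := by
        funext x
        rcases x with j | s <;>
          simp [hr, hel, her, Pi.single_apply, Finset.sum_apply, smul_eq_mul, Finset.sum_ite_eq']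
      rw [heq, Submodule.mkQ_apply, Submodule.Quotient.mk_eq_zero]
      exact Submodule.subset_span ⟨i, rfl⟩
    obtain ⟨c', hc'⟩ := h (((Fin n ⊕ Fin k) → R) ⧸ N) a ⟨c, key⟩
    choose f hf using fun t => Submodule.Quotient.mk_surjective N (c' t)
    have mem2 : ∀ i', ∃ w : Fin m → R, ∑ i, w i • r i =
        (∑ t, B' i' t • f t) - ∑ j, A' i' j • el j := by
      intro i'
      rw [← Submodule.mem_span_range_iff_exists_fun, ← hN, ← Submodule.Quotient.mk_eq_zero,
        ← Submodule.mkQ_apply, map_sub, sub_eq_zero]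
      have h2 : N.mkQ (∑ t, B' i' t • f t) = ∑ t, B' i' t • c' t := by
        simp [map_sum, map_smul, Submodule.mkQ_apply, hf]
      rw [h2, hc' i']
      simp [ha, map_sum, map_smul]
    choose w hw using mem2
    refine ⟨fun i' i => w i' i, fun t s => f t (Sum.inr s), fun t j => -(f t (Sum.inl j)), ?_, ?_⟩
    · ext i' s
      have h3 := congrFun (hw i') (Sum.inr s)
      simp only [hr, hel, Finset.sum_apply, Pi.smul_apply, Pi.sub_apply, Sum.elim_inr, Sum.elim_inl,
        smul_eq_mul, Pi.single_apply, mul_ite, mul_one, mul_zero, Finset.sum_ite_eq',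
        Finset.mem_univ, if_true, reduceCtorEq, if_false, Finset.sum_const_zero, sub_zero] at h3
      exact h3
    · ext i' j
      have h3 := congrFun (hw i') (Sum.inl j)
      simp only [hr, hel, Finset.sum_apply, Pi.smul_apply, Pi.sub_apply, Sum.elim_inl, Sum.elim_inr,
        smul_eq_mul, Pi.single_apply, mul_ite, mul_one, mul_zero, Finset.sum_ite_eq',
        Finset.mem_univ, if_true, Sum.inl.injEq, mul_neg] at h3
      have h4 : -∑ x, w i' x * A x j = (∑ t, B' i' t * f t (Sum.inl j)) - A' i' j := by
        rw [← Finset.sum_neg_distrib]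
        convert h3 using 2
        simp
      have h5 : ∑ x, w i' x * A x j = A' i' j - ∑ t, B' i' t * f t (Sum.inl j) := by
        have := congrArg Neg.neg h4
        simpa [neg_sub] using this
      show ∑ x, w i' x * A x j = A' i' j + ∑ t, B' i' t * -f t (Sum.inl j)
      simp only [Matrix.add_apply, Matrix.mul_apply, mul_neg, h5, ← Finset.sum_neg_distrib,
        sub_eq_add_neg]
end
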